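/- Fix an integer m ≥ 1, an arbitrary set Y of real sequences, and an infinite matrix A = (a_{nk}). Suppose that for each n and k the series d_{nk} = Σ_{j=k}^{∞} a_{nj} B_{jk} converges, where B is the inverse triangle of H^(m), and let D = (d_{nk}). Then A ∈ (h_0(Δ^(m)) : Y) if and only if the n-th row (a_{nk})_k of A belongs to the β-dual of h_0(Δ^(m)) for every n and D ∈ (c₀ : Y). -/

import Mathlib

open Filter Finset Topology

/- Real sequences are modelled as functions `ℕ → ℝ`, where the Lean index `n : ℕ`
corresponds to the paper's index `n + 1` (the paper indexes sequences by `k ≥ 1`).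
Thus the paper's entry `h_{nk} = ∑_{i=k}^{n} (-1)^{i-k} C(m, i-k) / (n+i-1)`
(for `1 ≤ k ≤ n`) becomes, with 0-based indices,
`hMat m n k = ∑_{i ∈ Icc k n} (-1)^{i-k} C(m, i-k) / (n+i+1)`. -/

/-- The entries of the triangle matrix `H^(m) = H Δ^(m)` (0-based indexing). -/
noncomputable def hMat (m n k : ℕ) : ℝ :=
  ∑ i ∈ Finset.Icc k n, (-1 : ℝ) ^ (i - k) * (Nat.choose m (i - k) : ℝ) / ((n + i + 1 : ℕ) : ℝ)

/-- The `H^(m)`-transform of a sequence: `(H^(m) x)_n = ∑_{k=1}^{n} h_{nk} x_k`. -/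
noncomputable def hTrans (m : ℕ) (x : ℕ → ℝ) (n : ℕ) : ℝ :=
  ∑ k ∈ Finset.range (n + 1), hMat m n k * x k

/-- `h_0(Δ^(m))`: sequences whose `H^(m)`-transform tends to `0`. -/
def hZero (m : ℕ) : Set (ℕ → ℝ) := {x | Tendsto (hTrans m x) atTop (𝓝 0)}

/-- `h_c(Δ^(m))`: sequences whose `H^(m)`-transform converges. -/
def hConv (m : ℕ) : Set (ℕ → ℝ) := {x | ∃ L : ℝ, Tendsto (hTrans m x) atTop (𝓝 L)}

/-- `h_∞(Δ^(m))`: sequences whose `H^(m)`-transform is bounded. -/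
def hBdd (m : ℕ) : Set (ℕ → ℝ) := {x | ∃ M : ℝ, ∀ n, |hTrans m x n| ≤ M}

/-- The space `c₀` of null real sequences. -/
def c0Seq : Set (ℕ → ℝ) := {y | Tendsto y atTop (𝓝 0)}

/-- The space `c` of convergent real sequences. -/
def cSeq : Set (ℕ → ℝ) := {y | ∃ L : ℝ, Tendsto y atTop (𝓝 L)}

/-- The space `ℓ∞` of bounded real sequences. -/
def linfSeq : Set (ℕ → ℝ) := {y | ∃ M : ℝ, ∀ n, |y n| ≤ M}

/-- The sup norm `‖y‖ = sup_n |y_n|` of a sequence. -/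
noncomputable def supNorm (y : ℕ → ℝ) : ℝ := ⨆ n, |y n|

/-- The norm `‖x‖ = sup_n |(H^(m) x)_n|` on the Hilbert difference sequence spaces. -/
noncomputable def hNorm (m : ℕ) (x : ℕ → ℝ) : ℝ := supNorm (hTrans m x)

/-- `A ∈ (X : Y)`: for every `x ∈ X` each row-series `∑_k a_{nk} x_k` converges and the
sequence of the sums belongs to `Y`. -/
def matClass (A : ℕ → ℕ → ℝ) (X Y : Set (ℕ → ℝ)) : Prop :=
  ∀ x ∈ X, ∃ Ax : ℕ → ℝ,
    (∀ n, Tendsto (fun K => ∑ k ∈ Finset.range K, A n k * x k) atTop (𝓝 (Ax n))) ∧ Ax ∈ Y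

/-- The β-dual of a set of real sequences. -/
def betaDual (X : Set (ℕ → ℝ)) : Set (ℕ → ℝ) :=
  {a | ∀ x ∈ X, ∃ L : ℝ, Tendsto (fun K => ∑ k ∈ Finset.range K, a k * x k) atTop (𝓝 L)}

section HilbertAux

noncomputable def hdC0 (y : ℕ → ℝ) (hy : Tendsto y atTop (𝓝 0)) : ZeroAtInftyContinuousMap ℕ ℝ :=
  ⟨⟨y, continuous_of_discreteTopology⟩, by rwa [cocompact_eq_atTop (α := ℕ)]⟩

@[simp] lemma hdC0_apply (y : ℕ → ℝ) (hy : Tendsto y atTop (𝓝 0)) (j : ℕ) : hdC0 y hy j = y j := rfl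

lemma hd_abs_apply_le_norm (f : ZeroAtInftyContinuousMap ℕ ℝ) (j : ℕ) : |f j| ≤ ‖f‖ := by
  rw [← ZeroAtInftyContinuousMap.norm_toBCF_eq_norm]
  simpa using f.toBCF.norm_coe_le_norm j

lemma hd_c0_norm_le (f : ZeroAtInftyContinuousMap ℕ ℝ) {C : ℝ} (hC : 0 ≤ C)
    (h : ∀ j, |f j| ≤ C) : ‖f‖ ≤ C := by
  rw [← ZeroAtInftyContinuousMap.norm_toBCF_eq_norm]
  exact (BoundedContinuousFunction.norm_le hC).mpr (fun j => by simpa using h j)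

noncomputable def hdEval (j : ℕ) : ZeroAtInftyContinuousMap ℕ ℝ →L[ℝ] ℝ :=
  LinearMap.mkContinuous
    { toFun := fun f => f j
      map_add' := fun f g => by simp
      map_smul' := fun c f => by simp } 1
    (fun f => by simpa using hd_abs_apply_le_norm f j)

@[simp] lemma hdEval_apply (j : ℕ) (f : ZeroAtInftyContinuousMap ℕ ℝ) : hdEval j f = f j := rfl

lemma hMat_eq_zero (m n k : ℕ) (h : n < k) : hMat m n k = 0 := by
  unfold hMat
  rw [Finset.Icc_eq_empty (by omega)]
  simp

lemma hd_tri_swap (f : ℕ → ℕ → ℝ) (K : ℕ) (hf : ∀ k j, k < j → f k j = 0) :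
    ∑ k ∈ Finset.range K, ∑ j ∈ Finset.range (k+1), f k j
      = ∑ j ∈ Finset.range K, ∑ k ∈ Finset.Ico j K, f k j := by
  have h1 : (∑ k ∈ Finset.range K, ∑ j ∈ Finset.range (k+1), f k j)
      = ∑ k ∈ Finset.range K, ∑ j ∈ Finset.range K, f k j := by
    refine Finset.sum_congr rfl fun k hk => Finset.sum_subset ?_ ?_
    · intro j hj; simp only [Finset.mem_range] at *; omega
    · intro j hj hj'; refine hf k j ?_; simp only [Finset.mem_range] at *; omega
  rw [h1, Finset.sum_comm]
  refine Finset.sum_congr rfl fun j hj => (Finset.sum_subset ?_ ?_).symm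
  · intro k hk; simp only [Finset.mem_Ico, Finset.mem_range] at *; omega
  · intro k hk hk'; refine hf k j ?_; simp only [Finset.mem_range, Finset.mem_Ico] at *; omega

noncomputable def bApp (B : ℕ → ℕ → ℝ) (y : ℕ → ℝ) (k : ℕ) : ℝ :=
  ∑ j ∈ Finset.range (k+1), B k j * y j

lemma hTrans_bApp (m : ℕ) (B : ℕ → ℕ → ℝ) (hBtri : ∀ n k, n < k → B n k = 0)
    (hBright : ∀ n k : ℕ, (∑ j ∈ Finset.Icc k n, hMat m n j * B j k) = if n = k then 1 else 0)
    (y : ℕ → ℝ) (n : ℕ) : hTrans m (bApp B y) n = y n := by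
  unfold hTrans bApp
  simp_rw [Finset.mul_sum, ← mul_assoc]
  rw [hd_tri_swap (fun k j => hMat m n k * B k j * y j) (n+1)
    (fun k j h => by simp [hBtri k j h])]
  have h2 : ∀ j ∈ Finset.range (n+1),
      (∑ k ∈ Finset.Ico j (n+1), hMat m n k * B k j * y j)
        = (if n = j then (1:ℝ) else 0) * y j := by
    intro j hj
    rw [← hBright n j, Finset.Ico_add_one_right_eq_Icc, Finset.sum_mul]
  rw [Finset.sum_congr rfl h2]
  simp [ite_mul]

lemma bApp_hTrans (m : ℕ) (B : ℕ → ℕ → ℝ)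
    (hBleft : ∀ n k : ℕ, (∑ j ∈ Finset.Icc k n, B n j * hMat m j k) = if n = k then 1 else 0)
    (x : ℕ → ℝ) (n : ℕ) : bApp B (hTrans m x) n = x n := by
  unfold bApp hTrans
  simp_rw [Finset.mul_sum, ← mul_assoc]
  rw [hd_tri_swap (fun j k => B n j * hMat m j k * x k) (n+1)
    (fun j k h => by simp [hMat_eq_zero m j k h])]
  have h2 : ∀ k ∈ Finset.range (n+1),
      (∑ j ∈ Finset.Ico k (n+1), B n j * hMat m j k * x k)
        = (if n = k then (1:ℝ) else 0) * x k := by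
    intro k hk
    rw [← hBleft n k, Finset.Ico_add_one_right_eq_Icc, Finset.sum_mul]
  rw [Finset.sum_congr rfl h2]
  simp [ite_mul]

lemma hd_partial_eq (B : ℕ → ℕ → ℝ) (hBtri : ∀ n k, n < k → B n k = 0)
    (a : ℕ → ℝ) (y : ℕ → ℝ) (K : ℕ) :
    ∑ k ∈ Finset.range K, a k * bApp B y k
      = ∑ j ∈ Finset.range K, (∑ k ∈ Finset.Ico j K, a k * B k j) * y j := by
  unfold bApp
  simp_rw [Finset.mul_sum, ← mul_assoc]
  rw [hd_tri_swap (fun k j => a k * B k j * y j) K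
    (fun k j h => by simp [hBtri k j h])]
  exact Finset.sum_congr rfl fun j hj => (Finset.sum_mul _ _ _).symm

lemma hd_tendsto_Ico_of_Icc {g : ℕ → ℝ} {k : ℕ} {L : ℝ}
    (h : Tendsto (fun J => ∑ j ∈ Finset.Icc k J, g j) atTop (𝓝 L)) :
    Tendsto (fun K => ∑ j ∈ Finset.Ico k K, g j) atTop (𝓝 L) := by
  have h2 : Tendsto (fun K : ℕ => ∑ j ∈ Finset.Icc k (K-1), g j) atTop (𝓝 L) :=
    h.comp (tendsto_sub_atTop_nat 1)
  refine h2.congr' ?_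
  filter_upwards [eventually_ge_atTop 1] with K hK
  congr 1
  rw [← Finset.Ico_add_one_right_eq_Icc]
  congr 1
  omega

lemma hd_core (B : ℕ → ℕ → ℝ) (hBtri : ∀ n k, n < k → B n k = 0)
    (hZ : Set (ℕ → ℝ))
    (hmem : ∀ y : ℕ → ℝ, Tendsto y atTop (𝓝 0) → bApp B y ∈ hZ)
    (a d : ℕ → ℝ)
    (hd : ∀ j, Tendsto (fun K => ∑ k ∈ Finset.Ico j K, a k * B k j) atTop (𝓝 (d j)))
    (hβ : ∀ x ∈ hZ, ∃ L, Tendsto (fun K => ∑ k ∈ Finset.range K, a k * x k) atTop (𝓝 L))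
    (y : ℕ → ℝ) (hy : Tendsto y atTop (𝓝 0)) (L : ℝ)
    (hL : Tendsto (fun K => ∑ k ∈ Finset.range K, a k * bApp B y k) atTop (𝓝 L)) :
    Tendsto (fun N => ∑ j ∈ Finset.range N, d j * y j) atTop (𝓝 L) := by
  classical
  set c : ℕ → ℕ → ℝ := fun K j => ∑ k ∈ Finset.Ico j K, a k * B k j with hc
  set fK : ℕ → (ZeroAtInftyContinuousMap ℕ ℝ →L[ℝ] ℝ) :=
    fun K => ∑ j ∈ Finset.range K, c K j • hdEval j with hfK
  have fK_apply : ∀ K f, fK K f = ∑ j ∈ Finset.range K, c K j * f j := by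
    intro K f
    simp [hfK, ContinuousLinearMap.sum_apply]
  have hconv : ∀ f : ZeroAtInftyContinuousMap ℕ ℝ, ∃ L',
      Tendsto (fun K => fK K f) atTop (𝓝 L') := by
    intro f
    have hf0 : Tendsto (⇑f) atTop (𝓝 0) := by
      have := f.zero_at_infty'
      rwa [cocompact_eq_atTop (α := ℕ)] at this
    obtain ⟨L', hL'⟩ := hβ (bApp B ⇑f) (hmem _ hf0)
    refine ⟨L', hL'.congr fun K => ?_⟩
    rw [hd_partial_eq B hBtri a (⇑f) K, fK_apply]
  obtain ⟨C, hC⟩ : ∃ C, ∀ K, ‖fK K‖ ≤ C := by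
    apply banach_steinhaus
    intro f
    obtain ⟨L', hL'⟩ := hconv f
    obtain ⟨M, hM⟩ := hL'.abs.bddAbove_range
    exact ⟨M, fun K => hM ⟨K, rfl⟩⟩
  set yf : ZeroAtInftyContinuousMap ℕ ℝ := hdC0 y hy with hyf
  have hyfL : Tendsto (fun K => fK K yf) atTop (𝓝 L) := by
    refine hL.congr fun K => ?_
    rw [hd_partial_eq B hBtri a y K, fK_apply]
    rfl
  have hr0 : ∀ N, Tendsto (fun j => if j < N then (0:ℝ) else y j) atTop (𝓝 0) := by
    intro N
    refine hy.congr' ?_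
    filter_upwards [eventually_ge_atTop N] with j hj
    simp [Nat.not_lt.mpr hj]
  set rN : ℕ → ZeroAtInftyContinuousMap ℕ ℝ := fun N => hdC0 _ (hr0 N) with hrN
  set S : ℕ → ℝ := fun N => ∑ j ∈ Finset.range N, d j * y j with hS
  have htrunc : ∀ N, Tendsto (fun K => fK K (yf - rN N)) atTop (𝓝 (S N)) := by
    intro N
    have h1 : Tendsto (fun K => ∑ j ∈ Finset.range N, c K j * y j) atTop (𝓝 (S N)) := by
      apply tendsto_finset_sum
      intro j hj
      exact (hd j).mul_const (y j)
    refine h1.congr' ?_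
    filter_upwards [eventually_ge_atTop N] with K hK
    rw [fK_apply]
    have hval : ∀ j, (yf - rN N) j = if j < N then y j else 0 := by
      intro j
      by_cases h : j < N <;> simp [hyf, hrN, h]
    rw [Finset.sum_congr rfl (fun j (hj : j ∈ Finset.range K) => by rw [hval j])]
    rw [← Finset.sum_subset (Finset.range_subset_range.mpr hK)]
    · refine Finset.sum_congr rfl fun j hj => ?_
      rw [if_pos (Finset.mem_range.mp hj)]
    · intro j hj hj'
      rw [if_neg (by simpa using hj'), mul_zero]
  have hkey : ∀ N, |L - S N| ≤ C * ‖rN N‖ := by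
    intro N
    have h2 : Tendsto (fun K => fK K (rN N)) atTop (𝓝 (L - S N)) := by
      have := hyfL.sub (htrunc N)
      refine this.congr fun K => ?_
      rw [← map_sub]
      congr 1
      abel
    have h3 : Tendsto (fun K => |fK K (rN N)|) atTop (𝓝 |L - S N|) := h2.abs
    refine le_of_tendsto h3 (Eventually.of_forall fun K => ?_)
    calc |fK K (rN N)| ≤ ‖fK K‖ * ‖rN N‖ := (fK K).le_opNorm _
      _ ≤ C * ‖rN N‖ := mul_le_mul_of_nonneg_right (hC K) (norm_nonneg _)
  have hnorm : Tendsto (fun N => ‖rN N‖) atTop (𝓝 0) := by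
    rw [Metric.tendsto_atTop]
    intro ε hε
    obtain ⟨M, hM⟩ := (Metric.tendsto_atTop.mp hy) (ε/2) (by linarith)
    refine ⟨M, fun N hN => ?_⟩
    have hb : ‖rN N‖ ≤ ε/2 := by
      apply hd_c0_norm_le _ (by linarith)
      intro j
      by_cases h : j < N
      · simp [hrN, h]; linarith
      · have : |y j| < ε/2 := by
          have := hM j (by omega)
          simpa [Real.dist_eq] using this
        simp [hrN, h]
        linarith
    have heq : dist ‖rN N‖ 0 = ‖rN N‖ := by
      simp [Real.dist_eq, abs_of_nonneg (norm_nonneg _)]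
    rw [heq]
    linarith
  have hfin : Tendsto (fun N => |S N - L|) atTop (𝓝 0) := by
    apply squeeze_zero (fun N => abs_nonneg _) (fun N => ?_) (by simpa using hnorm.const_mul C)
    rw [abs_sub_comm]
    exact hkey N
  rw [tendsto_iff_dist_tendsto_zero]
  simpa [Real.dist_eq] using hfin

end HilbertAux

/-- `A ∈ (hZero m : Y)` iff every row of `A` lies in the β-dual of `hZero m` and the
matrix `D`, `d_{nk} = ∑_{j=k}^∞ a_{nj} B_{jk}`, satisfies `D ∈ (c0Seq : Y)`. -/
theorem hilbert_diff_matrix_from_h0 (m : ℕ) (hm : 1 ≤ m) (Y : Set (ℕ → ℝ))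
    (A : ℕ → ℕ → ℝ)
    (B : ℕ → ℕ → ℝ)
    (hBtri : ∀ n k : ℕ, n < k → B n k = 0)
    (hBright : ∀ n k : ℕ, (∑ j ∈ Finset.Icc k n, hMat m n j * B j k) = if n = k then 1 else 0)
    (hBleft : ∀ n k : ℕ, (∑ j ∈ Finset.Icc k n, B n j * hMat m j k) = if n = k then 1 else 0)
    (D : ℕ → ℕ → ℝ)
    (hD : ∀ n k : ℕ,
      Tendsto (fun J => ∑ j ∈ Finset.Icc k J, A n j * B j k) atTop (𝓝 (D n k))) :
    matClass A (hZero m) Y ↔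
      ((∀ n : ℕ, (fun k => A n k) ∈ betaDual (hZero m)) ∧ matClass D c0Seq Y) := by
  have hmem : ∀ y : ℕ → ℝ, Tendsto y atTop (𝓝 0) → bApp B y ∈ hZero m := by
    intro y hy
    show Tendsto (hTrans m (bApp B y)) atTop (𝓝 0)
    refine hy.congr fun n => (hTrans_bApp m B hBtri hBright y n).symm
  have hd' : ∀ n j, Tendsto (fun K => ∑ k ∈ Finset.Ico j K, A n k * B k j) atTop (𝓝 (D n j)) :=
    fun n j => hd_tendsto_Ico_of_Icc (hD n j)
  constructor
  · intro hA
    refine ⟨fun n x hx => ?_, ?_⟩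
    · obtain ⟨Ax, h1, _⟩ := hA x hx
      exact ⟨Ax n, h1 n⟩
    · intro y hy
      have hyc : Tendsto y atTop (𝓝 0) := hy
      obtain ⟨Ax, h1, h2⟩ := hA (bApp B y) (hmem y hyc)
      refine ⟨Ax, fun n => ?_, h2⟩
      exact hd_core B hBtri (hZero m) hmem (A n) (D n) (hd' n)
        (fun x hx => (hA x hx).elim fun Ax' h => ⟨Ax' n, h.1 n⟩) y hyc (Ax n) (h1 n)
  · rintro ⟨hrow, hDY⟩
    intro x hx
    have hy : Tendsto (hTrans m x) atTop (𝓝 0) := hx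
    set y := hTrans m x with hydef
    have hxy : ∀ k, x k = bApp B y k := fun k => (bApp_hTrans m B hBleft x k).symm
    obtain ⟨Dy, hDy1, hDy2⟩ := hDY y hy
    refine ⟨Dy, fun n => ?_, hDy2⟩
    obtain ⟨L, hLn⟩ := hrow n x hx
    have hLy : Tendsto (fun K => ∑ k ∈ Finset.range K, A n k * bApp B y k) atTop (𝓝 L) :=
      hLn.congr fun K => Finset.sum_congr rfl fun k _ => by rw [hxy k]
    have hcore := hd_core B hBtri (hZero m) hmem (A n) (D n) (hd' n)
      (hrow n) y hy L hLy
    have hLD : L = Dy n := tendsto_nhds_unique hcore (hDy1 n)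
    rw [← hLD]
    exact hLn
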